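/- Let X and Y be smooth normed spaces over 𝔽 with unique compatible semi-inner products, and let f : X → Y be a surjective map satisfying |[f(x), f(y)]| = |[x, y]| for all x, y ∈ X. Then for every scalar λ ∈ 𝔽 and every x ∈ X there exists γ ∈ 𝔽 with |γ| = |λ| such that f(λ x) = γ f(x). -/

import Mathlib

open RCLike

/-- A support functional at `x`: a norm-one continuous linear functional with `φ x = ‖x‖`. -/
def SuppFunc (𝕜 : Type*) [RCLike 𝕜] {X : Type*} [NormedAddCommGroup X] [NormedSpace 𝕜 X]
    (x : X) (φ : X →L[𝕜] 𝕜) : Prop :=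
  ‖φ‖ = 1 ∧ φ x = (‖x‖ : 𝕜)

/-- `X` is smooth at `x` if there is a unique support functional at `x`. -/
def NormSmoothAt (𝕜 : Type*) [RCLike 𝕜] {X : Type*} [NormedAddCommGroup X] [NormedSpace 𝕜 X]
    (x : X) : Prop := ∃! φ : X →L[𝕜] 𝕜, SuppFunc 𝕜 x φ

/-- `X` is smooth if it is smooth at every nonzero point. -/
def NormSmooth (𝕜 : Type*) (X : Type*) [RCLike 𝕜] [NormedAddCommGroup X] [NormedSpace 𝕜 X] :
    Prop := ∀ x : X, x ≠ 0 → NormSmoothAt 𝕜 x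

/-- `sip` is the canonical semi-inner product `[u,v] = ‖v‖ * φ_v u` built from support
functionals (on a smooth space this pins `sip` down uniquely). -/
def IsCompatSIP (𝕜 : Type*) {X : Type*} [RCLike 𝕜] [NormedAddCommGroup X] [NormedSpace 𝕜 X]
    (sip : X → X → 𝕜) : Prop :=
  (∀ u : X, sip u 0 = 0) ∧
  ∀ (u v : X) (φ : X →L[𝕜] 𝕜), SuppFunc 𝕜 v φ → sip u v = (‖v‖ : 𝕜) * φ u

/-- Birkhoff–James orthogonality: `x ⊥ y` iff `‖x + a • y‖ ≥ ‖x‖` for all scalars. -/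
def BJOrth (𝕜 : Type*) {X : Type*} [RCLike 𝕜] [NormedAddCommGroup X] [NormedSpace 𝕜 X]
    (x y : X) : Prop := ∀ a : 𝕜, ‖x‖ ≤ ‖x + a • y‖

/-- A semi-inner product compatible with the norm: additive and homogeneous in the first
variable, conjugate-homogeneous in the second, positive definite, Cauchy–Schwarz, and
`[x,x] = ‖x‖²`. -/
def IsSIP (𝕜 : Type*) {X : Type*} [RCLike 𝕜] [NormedAddCommGroup X] [NormedSpace 𝕜 X]
    (sip : X → X → 𝕜) : Prop :=
  (∀ x y z : X, sip (x + y) z = sip x z + sip y z) ∧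
  (∀ (a : 𝕜) (x y : X), sip (a • x) y = a * sip x y) ∧
  (∀ (a : 𝕜) (x y : X), sip x (a • y) = (starRingEnd 𝕜) a * sip x y) ∧
  (∀ x : X, x ≠ 0 → 0 < re (sip x x) ∧ im (sip x x) = 0) ∧
  (∀ x y : X, ‖sip x y‖ ≤ Real.sqrt (re (sip x x)) * Real.sqrt (re (sip y y))) ∧
  (∀ x : X, sip x x = (‖x‖ : 𝕜) ^ 2)

section Aux

variable {𝕜 : Type*} [RCLike 𝕜] {X : Type*} [NormedAddCommGroup X] [NormedSpace 𝕜 X]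

lemma sip_self_aux {sip : X → X → 𝕜} (h : IsCompatSIP 𝕜 sip) (x : X) :
    sip x x = (‖x‖ : 𝕜) ^ 2 := by
  by_cases hx : x = 0
  · simp [hx, h.1]
  · obtain ⟨φ, hφ1, hφ2⟩ := exists_dual_vector 𝕜 x (norm_ne_zero_iff.mpr hx)
    rw [h.2 x x φ ⟨hφ1, hφ2⟩, hφ2]
    ring

lemma sip_smul_left_aux {sip : X → X → 𝕜} (h : IsCompatSIP 𝕜 sip) (l : 𝕜) (x y : X) :
    sip (l • x) y = l * sip x y := by
  by_cases hy : y = 0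
  · simp [hy, h.1]
  · obtain ⟨φ, hφ1, hφ2⟩ := exists_dual_vector 𝕜 y (norm_ne_zero_iff.mpr hy)
    rw [h.2 _ y φ ⟨hφ1, hφ2⟩, h.2 x y φ ⟨hφ1, hφ2⟩, map_smul]
    simp only [smul_eq_mul]
    ring

lemma exists_min_aux (v u : X) (hu : u ≠ 0) :
    ∃ t₀ : 𝕜, ∀ a : 𝕜, ‖v + t₀ • u‖ ≤ ‖v + a • u‖ := by
  have hu' : 0 < ‖u‖ := norm_pos_iff.mpr hu
  set R : ℝ := 2 * ‖v‖ / ‖u‖ with hR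
  have hR0 : 0 ≤ R := by positivity
  have hc : ContinuousOn (fun t : 𝕜 => ‖v + t • u‖) (Metric.closedBall 0 R) := by
    fun_prop
  obtain ⟨t₀, ht₀mem, ht₀⟩ := (isCompact_closedBall (0 : 𝕜) R).exists_isMinOn
    ⟨0, Metric.mem_closedBall_self hR0⟩ hc
  refine ⟨t₀, fun a => ?_⟩
  by_cases ha : a ∈ Metric.closedBall (0 : 𝕜) R
  · exact ht₀ ha
  · have h1 : ‖v + t₀ • u‖ ≤ ‖v‖ := by
      simpa using ht₀ (Metric.mem_closedBall_self hR0)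
    have ha' : R < ‖a‖ := by
      simpa [Metric.mem_closedBall, dist_zero_right] using ha
    have h3 : 2 * ‖v‖ < ‖a‖ * ‖u‖ := by
      rw [hR, div_lt_iff₀ hu'] at ha'
      linarith
    have h4 : ‖a • u‖ ≤ ‖v + a • u‖ + ‖v‖ := by
      have h5 := norm_sub_le (v + a • u) v
      rwa [add_sub_cancel_left] at h5
    rw [norm_smul] at h4
    linarith

lemma exists_supp_orth_aux {w u : X} (hw : w ≠ 0) (hli : LinearIndependent 𝕜 ![u, w])
    (hbj : ∀ a : 𝕜, ‖w‖ ≤ ‖w + a • u‖) :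
    ∃ φ : X →L[𝕜] 𝕜, SuppFunc 𝕜 w φ ∧ φ u = 0 := by
  have hwn : 0 < ‖w‖ := norm_pos_iff.mpr hw
  set p : Submodule 𝕜 X := Submodule.span 𝕜 (Set.range ![u, w]) with hp
  haveI : FiniteDimensional 𝕜 p :=
    FiniteDimensional.span_of_finite 𝕜 (Set.finite_range _)
  let b : Module.Basis (Fin 2) 𝕜 p := Module.Basis.span hli
  let g₀ : p →ₗ[𝕜] 𝕜 := b.constr 𝕜 ![0, (‖w‖ : 𝕜)]
  let g : p →L[𝕜] 𝕜 := LinearMap.toContinuousLinearMap g₀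
  have hb0 : (b 0 : X) = u := by
    exact congrArg Subtype.val (Module.Basis.span_apply hli 0)
  have hb1 : (b 1 : X) = w := by
    exact congrArg Subtype.val (Module.Basis.span_apply hli 1)
  have hg0 : g (b 0) = 0 := by
    simpa [g, g₀] using b.constr_basis 𝕜 ![0, (‖w‖ : 𝕜)] 0
  have hg1 : g (b 1) = (‖w‖ : 𝕜) := by
    simpa [g, g₀] using b.constr_basis 𝕜 ![0, (‖w‖ : 𝕜)] 1
  have key : ∀ z : p, ‖g z‖ ≤ ‖z‖ := by
    intro z
    have hz : (b.repr z 0) • b 0 + (b.repr z 1) • b 1 = z := by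
      have := b.sum_repr z
      rwa [Fin.sum_univ_two] at this
    set c := b.repr z 0 with hc
    set d := b.repr z 1 with hd
    have hgz : g z = d * (‖w‖ : 𝕜) := by
      rw [← hz]
      simp [map_add, map_smul, hg0, hg1, smul_eq_mul]
    have hzcoe : (z : X) = c • u + d • w := by
      rw [← hz]
      push_cast
      rw [hb0, hb1]
    have hzn : ‖z‖ = ‖c • u + d • w‖ := by
      rw [← hzcoe]
      rfl
    rw [hgz, hzn]
    have hnd : ‖d * (‖w‖ : 𝕜)‖ = ‖d‖ * ‖w‖ := by
      rw [norm_mul, RCLike.norm_ofReal, abs_norm]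
    rw [hnd]
    rcases eq_or_ne d 0 with hd0 | hd0
    · simp [hd0]
    · have h1 := hbj (d⁻¹ * c)
      calc ‖d‖ * ‖w‖ ≤ ‖d‖ * ‖w + (d⁻¹ * c) • u‖ := by
            exact mul_le_mul_of_nonneg_left h1 (norm_nonneg d)
        _ = ‖d • (w + (d⁻¹ * c) • u)‖ := by rw [norm_smul]
        _ = ‖c • u + d • w‖ := by
            rw [smul_add, smul_smul, ← mul_assoc, mul_inv_cancel₀ hd0, one_mul, add_comm]
  have hgle : ‖g‖ ≤ 1 := g.opNorm_le_bound zero_le_one (fun z => by simpa using key z)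
  obtain ⟨φ, hext, hnormφ⟩ := exists_extension_norm_eq p g
  have hφw : φ w = (‖w‖ : 𝕜) := by
    have h := hext (b 1)
    rw [hb1] at h
    rw [h, hg1]
  have hφu : φ u = 0 := by
    have h := hext (b 0)
    rw [hb0] at h
    rw [h, hg0]
  have hφle : ‖φ‖ ≤ 1 := hnormφ ▸ hgle
  have hφge : 1 ≤ ‖φ‖ := by
    have h := φ.le_opNorm w
    rw [hφw, RCLike.norm_ofReal, abs_norm] at h
    nlinarith
  exact ⟨φ, ⟨le_antisymm hφle hφge, hφw⟩, hφu⟩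

end Aux

theorem stmt7 {𝕜 : Type*} [RCLike 𝕜] {X Y : Type*} [NormedAddCommGroup X] [NormedSpace 𝕜 X]
    [NormedAddCommGroup Y] [NormedSpace 𝕜 Y]
    (hsmX : NormSmooth 𝕜 X) (hsmY : NormSmooth 𝕜 Y)
    (sipX : X → X → 𝕜) (hX : IsCompatSIP 𝕜 sipX)
    (sipY : Y → Y → 𝕜) (hY : IsCompatSIP 𝕜 sipY)
    (f : X → Y) (hsurj : Function.Surjective f)
    (hf : ∀ x y : X, ‖sipY (f x) (f y)‖ = ‖sipX x y‖) :
    ∀ (l : 𝕜) (x : X), ∃ γ : 𝕜, ‖γ‖ = ‖l‖ ∧ f (l • x) = γ • f x := by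
  have hnorm : ∀ z : X, ‖f z‖ = ‖z‖ := by
    intro z
    have h1 : ‖sipY (f z) (f z)‖ = ‖sipX z z‖ := hf z z
    rw [sip_self_aux hY, sip_self_aux hX] at h1
    have h2 : ‖f z‖ ^ 2 = ‖z‖ ^ 2 := by
      have e : ∀ (r : ℝ), ‖((r : 𝕜)) ^ 2‖ = |r| ^ 2 := by
        intro r
        rw [norm_pow, RCLike.norm_ofReal]
      rw [e, e, abs_norm, abs_norm] at h1
      exact h1
    nlinarith [norm_nonneg (f z), norm_nonneg z]
  have hf0 : f 0 = 0 := by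
    rw [← norm_eq_zero, hnorm]
    simp
  intro l x
  by_cases hx : x = 0
  · exact ⟨l, rfl, by simp [hx, hf0]⟩
  by_cases hl : l = 0
  · exact ⟨0, by simp [hl], by simp [hl, hf0]⟩
  have hxn : 0 < ‖x‖ := norm_pos_iff.mpr hx
  set u := f (l • x) with hudef
  set v := f x with hvdef
  have hun : ‖u‖ = ‖l‖ * ‖x‖ := by rw [hudef, hnorm, norm_smul]
  have hvn : ‖v‖ = ‖x‖ := hnorm x
  have hu : u ≠ 0 := by
    rw [← norm_pos_iff, hun]
    exact mul_pos (norm_pos_iff.mpr hl) hxn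
  have hv : v ≠ 0 := by
    rw [← norm_pos_iff, hvn]
    exact hxn
  by_cases hdep : ∃ γ : 𝕜, u = γ • v
  · obtain ⟨γ, hγ⟩ := hdep
    refine ⟨γ, ?_, hγ⟩
    have h : ‖u‖ = ‖γ • v‖ := by rw [hγ]
    rw [hun, norm_smul, hvn] at h
    exact (mul_right_cancel₀ (ne_of_gt hxn) h).symm
  · exfalso
    obtain ⟨t₀, ht₀⟩ := exists_min_aux (𝕜 := 𝕜) v u hu
    set w := v + t₀ • u with hwdef
    have hw : w ≠ 0 := by
      intro h0
      have h0' : v + t₀ • u = 0 := h0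
      have hveq : v = (-t₀) • u := by
        rw [neg_smul]
        exact eq_neg_of_add_eq_zero_left h0'
      have ht0 : (-t₀) ≠ 0 := by
        intro h
        rw [h, zero_smul] at hveq
        exact hv hveq
      exact hdep ⟨(-t₀)⁻¹, by rw [hveq, smul_smul, inv_mul_cancel₀ ht0, one_smul]⟩
    have hli : LinearIndependent 𝕜 ![u, w] := by
      rw [LinearIndependent.pair_iff' hu]
      intro a ha
      have hveq : v = (a - t₀) • u := by
        rw [sub_smul, ha, hwdef]
        abel
      have hat : a - t₀ ≠ 0 := by
        intro h
        rw [h, zero_smul] at hveq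
        exact hv hveq
      exact hdep ⟨(a - t₀)⁻¹, by rw [hveq, smul_smul, inv_mul_cancel₀ hat, one_smul]⟩
    have hbj : ∀ a : 𝕜, ‖w‖ ≤ ‖w + a • u‖ := by
      intro a
      have h1 := ht₀ (t₀ + a)
      calc ‖w‖ ≤ ‖v + (t₀ + a) • u‖ := h1
        _ = ‖w + a • u‖ := by rw [hwdef, add_smul, add_assoc]
    obtain ⟨φ, hφ, hφu⟩ := exists_supp_orth_aux hw hli hbj
    obtain ⟨y, hy⟩ := hsurj w
    have e1 : sipY u w = (‖w‖ : 𝕜) * φ u := hY.2 u w φ hφ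
    have e2 : sipY v w = (‖w‖ : 𝕜) * φ v := hY.2 v w φ hφ
    have h1 : ‖sipY u w‖ = ‖sipX (l • x) y‖ := by rw [← hy]; exact hf _ _
    have h2 : ‖sipY v w‖ = ‖sipX x y‖ := by rw [← hy]; exact hf _ _
    have hsu : sipY u w = 0 := by rw [e1, hφu, mul_zero]
    have hsx : sipX x y = 0 := by
      have h3 : ‖sipX (l • x) y‖ = 0 := by rw [← h1, hsu, norm_zero]
      rw [sip_smul_left_aux hX, norm_mul] at h3
      rcases mul_eq_zero.mp h3 with h | h
      · exact absurd (norm_eq_zero.mp h) hl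
      · exact norm_eq_zero.mp h
    have hφv : φ v = 0 := by
      have hz : sipY v w = 0 := norm_eq_zero.mp (by rw [h2, hsx, norm_zero])
      rw [e2] at hz
      have hwk : (‖w‖ : 𝕜) ≠ 0 := by
        simpa [RCLike.ofReal_eq_zero, norm_eq_zero] using hw
      exact (mul_eq_zero.mp hz).resolve_left hwk
    have hcontra : (‖w‖ : 𝕜) = 0 := by
      rw [← hφ.2, hwdef]
      simp [map_add, map_smul, hφv, hφu, smul_eq_mul]
    rw [RCLike.ofReal_eq_zero, norm_eq_zero] at hcontra
    exact hw hcontra
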